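/- Let n and s be integers with s ≥ 3 and n ≥ 2s + 3, and let F be a stable 3-graph with vertex set [n] that has property U(s, 2s+1), ν(∂F) = s + 1, and ν(∂F − {1}) = s + 1 (where ∂F − {1} denotes the edges of ∂F not containing 1). Let M = { {i+1, 2s+4−i} : 1 ≤ i ≤ s+1 }. Then for any three distinct e₁, e₂, e₃ ∈ M, there do not exist two disjoint edges f₁, f₂ ∈ F with f₁, f₂ ⊆ e₁ ∪ e₂ ∪ e₃ ∪ {1}. -/

import Mathlib

open Finset

/-- `F₁ ≺ F₂`: same size, and the `i`-th smallest element of `F₁` is at most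
the `i`-th smallest element of `F₂`. -/
def PrecS (A B : Finset ℕ) : Prop :=
  A.card = B.card ∧
    ∀ i, i < A.card → (A.sort (· ≤ ·)).getD i 0 ≤ (B.sort (· ≤ ·)).getD i 0

/-- A family of subsets of `[n] = {1,…,n}` is stable (shifted). -/
def IsStable (n : ℕ) (F : Finset (Finset ℕ)) : Prop :=
  ∀ A B : Finset ℕ, A ⊆ Finset.Icc 1 n → B ∈ F → PrecS A B → A ∈ F

/-- Property `U(s, q)`: any `s` edges (repetitions allowed) have union of size at most `q`. -/
def HasU (F : Finset (Finset ℕ)) (s q : ℕ) : Prop :=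
  ∀ f : Fin s → Finset ℕ, (∀ i, f i ∈ F) → (Finset.univ.biUnion f).card ≤ q

/-- Matching number: the maximum size of a set of pairwise disjoint edges of `F`. -/
def matchNum (F : Finset (Finset ℕ)) : ℕ :=
  (F.powerset.filter fun M => ∀ a ∈ M, ∀ b ∈ M, a ≠ b → Disjoint a b).sup Finset.card

/-- Shadow of a 3-uniform family: all 2-element subsets of its edges. -/
def shadow2 (F : Finset (Finset ℕ)) : Finset (Finset ℕ) :=
  F.biUnion fun f => f.powersetCard 2

/-- Deletion of the first `i` vertices: edges disjoint from `[i] = {1,…,i}`. -/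
def del (F : Finset (Finset ℕ)) (i : ℕ) : Finset (Finset ℕ) :=
  F.filter fun e => Disjoint e (Finset.Icc 1 i)


lemma sort_card_three {B : Finset ℕ} (hB : B.card = 3) :
    ∃ b₀ b₁ b₂, b₀ < b₁ ∧ b₁ < b₂ ∧ (∀ x ∈ B, x = b₀ ∨ x = b₁ ∨ x = b₂) ∧
      b₀ ∈ B ∧ b₁ ∈ B ∧ b₂ ∈ B ∧ B.sort (· ≤ ·) = [b₀, b₁, b₂] := by
  have hlen : (B.sort (· ≤ ·)).length = 3 := by rw [Finset.length_sort, hB]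
  have hs : (B.sort (· ≤ ·)).Pairwise (· < ·) := B.sortedLT_sort.pairwise
  rcases hl : B.sort (· ≤ ·) with _ | ⟨a, _ | ⟨b, _ | ⟨c, _ | _⟩⟩⟩ <;>
      rw [hl] at hlen <;> simp at hlen
  rw [hl] at hs
  simp [List.pairwise_cons] at hs
  have hmem : ∀ x, x ∈ B ↔ (x = a ∨ x = b ∨ x = c) := by
    intro x
    rw [← Finset.mem_sort (α := ℕ) (· ≤ ·), hl]
    simp
  exact ⟨a, b, c, hs.1.1, hs.2, fun x hx => (hmem x).1 hx,
    (hmem a).2 (by tauto), (hmem b).2 (by tauto), (hmem c).2 (by tauto), rfl⟩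

lemma card_triple {a b c : ℕ} (hab : a < b) (hbc : b < c) :
    ({a, b, c} : Finset ℕ).card = 3 := by
  rw [Finset.card_insert_of_notMem (by simp; omega),
    Finset.card_insert_of_notMem (by simp; omega), Finset.card_singleton]

lemma sort_triple {a b c : ℕ} (hab : a < b) (hbc : b < c) :
    ({a, b, c} : Finset ℕ).sort (· ≤ ·) = [a, b, c] := by
  obtain ⟨b₀, b₁, b₂, h01, h12, hall, hm0, hm1, hm2, hsort⟩ :=
    sort_card_three (card_triple hab hbc)
  simp at hm0 hm1 hm2
  have ha := hall a (by simp)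
  have hb := hall b (by simp)
  have hc := hall c (by simp)
  have : b₀ = a ∧ b₁ = b ∧ b₂ = c := by omega
  rw [hsort, this.1, this.2.1, this.2.2]

lemma triple_mem (n : ℕ) (F : Finset (Finset ℕ))
    (hF : ∀ e ∈ F, e ⊆ Finset.Icc 1 n ∧ e.card = 3)
    (hst : IsStable n F)
    {f : Finset ℕ} (hf : f ∈ F) {x y i j : ℕ}
    (hx : x ∈ f) (hy : y ∈ f) (hxy : x ≠ y)
    (hxi : i + 1 ≤ x) (hyi : i + 1 ≤ y) (hyj : j ≤ y)
    (h1i : 1 ≤ i) (hij : i + 1 < j) (hjn : j ≤ n) :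
    ({1, i + 1, j} : Finset ℕ) ∈ F := by
  obtain ⟨hfsub, hfcard⟩ := hF f hf
  obtain ⟨b₀, b₁, b₂, h01, h12, hall, hm0, hm1, hm2, hsort⟩ := sort_card_three hfcard
  have h1i' : (1:ℕ) < i + 1 := by omega
  have hb0 : 1 ≤ b₀ := (Finset.mem_Icc.1 (hfsub hm0)).1
  have hxd := hall x hx
  have hyd := hall y hy
  apply hst _ f ?_ hf
  · constructor
    · rw [card_triple h1i' hij, hfcard]
    · intro k hk
      rw [card_triple h1i' hij] at hk
      rw [sort_triple h1i' hij, hsort]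
      interval_cases k <;> simp <;> omega
  · intro v hv
    simp at hv
    simp [Finset.mem_Icc]
    omega

lemma exists_big {V : Finset ℕ} {a c : ℕ} (hge : ∀ x ∈ V, a ≤ x)
    (hc : c ≤ V.card) (hc1 : 1 ≤ c) : ∃ m ∈ V, a + c - 1 ≤ m := by
  have hne : V.Nonempty := Finset.card_pos.1 (by omega)
  refine ⟨V.max' hne, V.max'_mem hne, ?_⟩
  have hsub : V ⊆ Finset.Icc a (V.max' hne) := fun x hx =>
    Finset.mem_Icc.2 ⟨hge x hx, V.le_max' x hx⟩
  have := Finset.card_le_card hsub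
  rw [Nat.card_Icc] at this
  omega

lemma good_pair (s i : ℕ) (M' : Finset (Finset ℕ))
    (hcard : M'.card = s + 1)
    (hdisj : ∀ a ∈ M', ∀ b ∈ M', a ≠ b → Disjoint a b)
    (h2 : ∀ q ∈ M', q.card = 2)
    (hge2 : ∀ q ∈ M', ∀ x ∈ q, 2 ≤ x)
    (hi : 1 ≤ i) (his : i ≤ s + 1) :
    ∃ q ∈ M', ∃ x ∈ q, ∃ y ∈ q, x ≠ y ∧ i + 1 ≤ x ∧ i + 1 ≤ y ∧ 2 * s + 4 - i ≤ y := by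
  classical
  set Good := M'.filter (fun q => ∀ x ∈ q, i + 1 ≤ x) with hGood
  set Bad := M'.filter (fun q => ¬ ∀ x ∈ q, i + 1 ≤ x) with hBad
  have hsplit : Good.card + Bad.card = s + 1 := by
    rw [hGood, hBad, Finset.card_filter_add_card_filter_not, hcard]
  -- Bad.card ≤ i - 1
  have hBadcard : Bad.card ≤ i - 1 := by
    have hsub : Bad.biUnion (fun q => q.filter (· ≤ i)) ⊆ Finset.Icc 2 i := by
      intro x hx
      simp only [Finset.mem_biUnion, Finset.mem_filter] at hx
      obtain ⟨q, hq, hxq, hxi⟩ := hx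
      exact Finset.mem_Icc.2 ⟨hge2 q (Finset.mem_filter.1 hq).1 x hxq, hxi⟩
    have hbu : (Bad.biUnion (fun q => q.filter (· ≤ i))).card =
        ∑ q ∈ Bad, (q.filter (· ≤ i)).card := by
      apply Finset.card_biUnion
      intro q hq q' hq' hne
      exact Finset.disjoint_filter_filter
        (hdisj q (Finset.mem_filter.1 hq).1 q' (Finset.mem_filter.1 hq').1 hne)
    have hone : ∀ q ∈ Bad, 1 ≤ (q.filter (· ≤ i)).card := by
      intro q hq
      obtain ⟨hqM, hqbad⟩ := Finset.mem_filter.1 hq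
      push_neg at hqbad
      obtain ⟨x, hxq, hxi⟩ := hqbad
      have : x ∈ q.filter (· ≤ i) := Finset.mem_filter.2 ⟨hxq, by omega⟩
      exact Finset.card_pos.2 ⟨x, this⟩
    have h1 : Bad.card ≤ ∑ q ∈ Bad, (q.filter (· ≤ i)).card := by
      calc Bad.card = ∑ _q ∈ Bad, 1 := by simp
        _ ≤ _ := Finset.sum_le_sum hone
    have h2' := Finset.card_le_card hsub
    rw [hbu] at h2'
    rw [Nat.card_Icc] at h2'
    omega
  have hGoodcard : s + 2 - i ≤ Good.card := by omega
  set V := Good.biUnion (fun q => q) with hV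
  have hVcard : V.card = 2 * Good.card := by
    rw [hV, Finset.card_biUnion (fun q hq q' hq' hne =>
      hdisj q (Finset.mem_filter.1 hq).1 q' (Finset.mem_filter.1 hq').1 hne)]
    rw [Finset.sum_congr rfl (fun q hq => h2 q (Finset.mem_filter.1 hq).1)]
    simp [mul_comm, hGood]
  have hVge : ∀ x ∈ V, i + 1 ≤ x := by
    intro x hx
    simp only [hV, Finset.mem_biUnion] at hx
    obtain ⟨q, hq, hxq⟩ := hx
    exact (Finset.mem_filter.1 hq).2 x hxq
  obtain ⟨m, hmV, hm⟩ := exists_big hVge (c := 2 * (s + 2 - i)) (by omega) (by omega)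
  simp only [hV, Finset.mem_biUnion] at hmV
  obtain ⟨q, hq, hmq⟩ := hmV
  have hqM := (Finset.mem_filter.1 hq).1
  have hqg := (Finset.mem_filter.1 hq).2
  have hq2 := h2 q hqM
  -- second element of q
  have : (q.erase m).Nonempty := by
    rw [← Finset.card_pos, Finset.card_erase_of_mem hmq, hq2]; omega
  obtain ⟨x, hxe⟩ := this
  have hxq : x ∈ q := Finset.mem_of_mem_erase hxe
  have hxm : x ≠ m := Finset.ne_of_mem_erase hxe
  exact ⟨q, hqM, x, hxq, m, hmq, hxm, hqg x hxq, hqg m hmq, by omega⟩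

/-- Claim 2 of Case 2 in Lemma 3.5: for distinct e₁, e₂, e₃ in the matching
M = {{i+1, 2s+4-i} : 1 ≤ i ≤ s+1}, the restriction of F to e₁ ∪ e₂ ∪ e₃ ∪ {1}
contains no matching of size two. -/
theorem case2_claim2 (n s : ℕ) (hs : 3 ≤ s) (hn : 2 * s + 3 ≤ n)
    (F : Finset (Finset ℕ))
    (hF : ∀ e ∈ F, e ⊆ Finset.Icc 1 n ∧ e.card = 3)
    (hst : IsStable n F)
    (hU : HasU F s (2 * s + 1))
    (hnus : matchNum (shadow2 F) = s + 1)
    (hnus1 : matchNum ((shadow2 F).filter fun e => 1 ∉ e) = s + 1) :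
    ∀ e₁ ∈ (Finset.Icc 1 (s + 1)).image (fun i => ({i + 1, 2 * s + 4 - i} : Finset ℕ)),
      ∀ e₂ ∈ (Finset.Icc 1 (s + 1)).image (fun i => ({i + 1, 2 * s + 4 - i} : Finset ℕ)),
        ∀ e₃ ∈ (Finset.Icc 1 (s + 1)).image (fun i => ({i + 1, 2 * s + 4 - i} : Finset ℕ)),
          e₁ ≠ e₂ → e₁ ≠ e₃ → e₂ ≠ e₃ →
            ¬ ∃ f₁ ∈ F, ∃ f₂ ∈ F, Disjoint f₁ f₂ ∧
              f₁ ⊆ e₁ ∪ e₂ ∪ e₃ ∪ {1} ∧ f₂ ⊆ e₁ ∪ e₂ ∪ e₃ ∪ {1} := by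
  classical
  -- Step 1: extract a matching of size s+1 in the 1-free shadow
  set G := (shadow2 F).filter (fun e => 1 ∉ e) with hG
  have hPne : (G.powerset.filter fun M => ∀ a ∈ M, ∀ b ∈ M, a ≠ b → Disjoint a b).Nonempty :=
    ⟨∅, by simp⟩
  obtain ⟨M', hM'mem, hsup⟩ := Finset.exists_mem_eq_sup _ hPne Finset.card
  have hM'card : M'.card = s + 1 := by
    have : matchNum G = M'.card := hsup
    omega
  obtain ⟨hM'sub', hM'disj⟩ := Finset.mem_filter.1 hM'mem
  have hM'sub : M' ⊆ G := Finset.mem_powerset.1 hM'sub'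
  have hshad : ∀ q ∈ M', (∃ f ∈ F, q ⊆ f) ∧ q.card = 2 ∧ ∀ x ∈ q, 2 ≤ x := by
    intro q hq
    have := hM'sub hq
    rw [hG, Finset.mem_filter] at this
    obtain ⟨hq1, hq2⟩ := this
    rw [shadow2, Finset.mem_biUnion] at hq1
    obtain ⟨f, hfF, hqf⟩ := hq1
    rw [Finset.mem_powersetCard] at hqf
    refine ⟨⟨f, hfF, hqf.1⟩, hqf.2, fun x hx => ?_⟩
    have hx1 : x ∈ Finset.Icc 1 n := (hF f hfF).1 (hqf.1 hx)
    rw [Finset.mem_Icc] at hx1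
    have : x ≠ 1 := fun h => hq2 (h ▸ hx)
    omega
  -- Step 2: all triples {1, i+1, 2s+4-i} are in F
  have hT : ∀ i ∈ Finset.Icc 1 (s + 1), ({1, i + 1, 2 * s + 4 - i} : Finset ℕ) ∈ F := by
    intro i hi
    rw [Finset.mem_Icc] at hi
    obtain ⟨q, hqM, x, hxq, y, hyq, hxy, hxi, hyi, hyj⟩ :=
      good_pair s i M' hM'card hM'disj (fun q hq => (hshad q hq).2.1)
        (fun q hq => (hshad q hq).2.2) hi.1 hi.2
    obtain ⟨⟨f, hfF, hqf⟩, _, _⟩ := hshad q hqM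
    exact triple_mem n F hF hst hfF (hqf hxq) (hqf hyq) hxy hxi hyi hyj
      hi.1 (by omega) (by omega)
  -- Step 3: main argument
  intro e₁ he₁ e₂ he₂ e₃ he₃ h12 h13 h23 ⟨f₁, hf₁, f₂, hf₂, hdisj, hsub₁, hsub₂⟩
  simp only [Finset.mem_image] at he₁ he₂ he₃
  obtain ⟨a₁, ha₁, rfl⟩ := he₁
  obtain ⟨a₂, ha₂, rfl⟩ := he₂
  obtain ⟨a₃, ha₃, rfl⟩ := he₃
  rw [Finset.mem_Icc] at ha₁ ha₂ ha₃
  have ha12 : a₁ ≠ a₂ := fun h => h12 (by rw [h])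
  have ha13 : a₁ ≠ a₃ := fun h => h13 (by rw [h])
  have ha23 : a₂ ≠ a₃ := fun h => h23 (by rw [h])
  set R := (((Finset.Icc 1 (s + 1)).erase a₁).erase a₂).erase a₃ with hR
  have hRsub : R ⊆ Finset.Icc 1 (s + 1) := by
    intro x hx
    exact Finset.mem_of_mem_erase (Finset.mem_of_mem_erase (Finset.mem_of_mem_erase hx))
  have hRcard : R.card = s - 2 := by
    have hm3 : a₃ ∈ ((Finset.Icc 1 (s + 1)).erase a₁).erase a₂ := by
      rw [Finset.mem_erase, Finset.mem_erase, Finset.mem_Icc]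
      exact ⟨Ne.symm ha23, Ne.symm ha13, by omega⟩
    have hm2 : a₂ ∈ (Finset.Icc 1 (s + 1)).erase a₁ := by
      rw [Finset.mem_erase, Finset.mem_Icc]
      exact ⟨Ne.symm ha12, by omega⟩
    have hm1 : a₁ ∈ Finset.Icc 1 (s + 1) := Finset.mem_Icc.2 (by omega)
    rw [hR, Finset.card_erase_of_mem hm3, Finset.card_erase_of_mem hm2,
      Finset.card_erase_of_mem hm1, Nat.card_Icc]
    omega
  -- Step 4: build s edges whose union is too big
  set r := R.sort (· ≤ ·) with hr
  have hrlen : r.length = s - 2 := by rw [hr, Finset.length_sort, hRcard]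
  set T : ℕ → Finset ℕ := fun i => ({1, i + 1, 2 * s + 4 - i} : Finset ℕ) with hTdef
  set g : Fin s → Finset ℕ := fun k =>
    if k.1 = 0 then f₁ else if k.1 = 1 then f₂ else T (r.getD (k.1 - 2) 1) with hg
  have hgF : ∀ k, g k ∈ F := by
    intro k
    rw [hg]
    dsimp only
    split_ifs with h0 h1
    · exact hf₁
    · exact hf₂
    · have hk2 : k.1 - 2 < r.length := by rw [hrlen]; omega
      have hmem : r.getD (k.1 - 2) 1 ∈ r := by
        rw [List.getD_eq_getElem _ _ hk2]; exact List.getElem_mem _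
      exact hT _ (hRsub ((Finset.mem_sort _).1 hmem))
  have hcard_le := hU g hgF
  have hWsub : (f₁ ∪ f₂) ∪ R.biUnion (fun i => ({i + 1, 2 * s + 4 - i} : Finset ℕ))
      ⊆ Finset.univ.biUnion g := by
    intro v hv
    rw [Finset.mem_union] at hv
    rcases hv with hv | hv
    · rw [Finset.mem_union] at hv
      rcases hv with hv | hv
      · exact Finset.mem_biUnion.2 ⟨⟨0, by omega⟩, Finset.mem_univ _, by simpa [hg] using hv⟩
      · exact Finset.mem_biUnion.2 ⟨⟨1, by omega⟩, Finset.mem_univ _, by simpa [hg] using hv⟩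
    · rw [Finset.mem_biUnion] at hv
      obtain ⟨i, hiR, hvi⟩ := hv
      have hir : i ∈ r := (Finset.mem_sort _).2 hiR
      obtain ⟨idx, hidx, hget⟩ := List.mem_iff_getElem.1 hir
      have hidx' : idx + 2 < s := by omega
      refine Finset.mem_biUnion.2 ⟨⟨idx + 2, hidx'⟩, Finset.mem_univ _, ?_⟩
      have hgk : g ⟨idx + 2, hidx'⟩ = T i := by
        rw [hg]
        dsimp only
        rw [if_neg (by omega), if_neg (by omega)]
        congr 1
        rw [show idx + 2 - 2 = idx from rfl, List.getD_eq_getElem _ _ (by omega), hget]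
      rw [hgk, hTdef]
      simp only [Finset.mem_insert, Finset.mem_singleton] at hvi ⊢
      tauto
  have hWcard : ((f₁ ∪ f₂) ∪ R.biUnion (fun i => ({i + 1, 2 * s + 4 - i} : Finset ℕ))).card
      = 2 * s + 2 := by
    have hd12 : (f₁ ∪ f₂).card = 6 := by
      rw [Finset.card_union_of_disjoint hdisj, (hF f₁ hf₁).2, (hF f₂ hf₂).2]
    have hdisjb : ∀ p ∈ R, ∀ q ∈ R, p ≠ q →
        Disjoint ({p + 1, 2 * s + 4 - p} : Finset ℕ) {q + 1, 2 * s + 4 - q} := by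
      intro p hp q hq hpq
      have hp' := Finset.mem_Icc.1 (hRsub hp)
      have hq' := Finset.mem_Icc.1 (hRsub hq)
      rw [Finset.disjoint_left]
      intro v hv hv'
      simp only [Finset.mem_insert, Finset.mem_singleton] at hv hv'
      omega
    have hbd : (R.biUnion fun i => ({i + 1, 2 * s + 4 - i} : Finset ℕ)).card = 2 * (s - 2) := by
      rw [Finset.card_biUnion hdisjb]
      have h2c : ∀ i ∈ R, ({i + 1, 2 * s + 4 - i} : Finset ℕ).card = 2 := by
        intro i hi
        have hi' := Finset.mem_Icc.1 (hRsub hi)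
        rw [Finset.card_insert_of_notMem, Finset.card_singleton]
        simp only [Finset.mem_singleton]
        omega
      rw [Finset.sum_congr rfl h2c, Finset.sum_const, hRcard, smul_eq_mul, mul_comm]
    rw [Finset.card_union_of_disjoint, hd12, hbd]
    · omega
    · rw [Finset.disjoint_left]
      intro v hv hv'
      rw [Finset.mem_union] at hv
      have hvS : v ∈ ({a₁ + 1, 2 * s + 4 - a₁} : Finset ℕ) ∪ {a₂ + 1, 2 * s + 4 - a₂}
          ∪ {a₃ + 1, 2 * s + 4 - a₃} ∪ {1} := by
        rcases hv with h | h
        · exact hsub₁ h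
        · exact hsub₂ h
      rw [Finset.mem_biUnion] at hv'
      obtain ⟨i, hiR, hvi⟩ := hv'
      have hi' := Finset.mem_Icc.1 (hRsub hiR)
      have hne3 : i ≠ a₃ := Finset.ne_of_mem_erase hiR
      have hne2 : i ≠ a₂ := Finset.ne_of_mem_erase (Finset.mem_of_mem_erase hiR)
      have hne1 : i ≠ a₁ :=
        Finset.ne_of_mem_erase (Finset.mem_of_mem_erase (Finset.mem_of_mem_erase hiR))
      simp only [Finset.mem_union, Finset.mem_insert, Finset.mem_singleton] at hvS hvi
      omega
  have hmono := Finset.card_le_card hWsub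
  omega
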